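/- arXiv:2506.11495 — 2 statements merged into one kernel-verified Lean document; each statement's English description precedes it below -/
import Mathlib

section
/- Let I be a proper ideal of R such that 2 + I is not a unit in R/I. Then for every r in R, the coset r + I is an independent set in G_UZ(R): no two distinct elements of r + I are adjacent. -/
open SimpleGraph

/-- The unit-zero divisor graph of a commutative ring: distinct `u`, `v` are adjacent
iff `u + v` is a unit and `u * v` is a zero divisor. -/
def GUZ (R : Type*) [CommRing R] : SimpleGraph R where
  Adj u v := u ≠ v ∧ IsUnit (u + v) ∧ ∃ y : R, y ≠ 0 ∧ u * v * y = 0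
  symm := by
    constructor; intro u v h
    refine ⟨h.1.symm, ?_, ?_⟩
    · rw [add_comm]; exact h.2.1
    · rw [mul_comm]; exact h.2.2
  loopless := by constructor; intro u h; exact h.1 rfl

/-- If `I` is a proper ideal of `R` such that `2 + I` is not a unit of `R/I`, then every
coset `r + I` is an independent set in `G_UZ(R)`. -/
theorem stmt13 (R : Type*) [CommRing R] [Fintype R] (I : Ideal R) (hI : I ≠ ⊤)
    (h2 : ¬ IsUnit (Ideal.Quotient.mk I (2 : R))) :
    ∀ r a b : R, a - r ∈ I → b - r ∈ I → ¬ (GUZ R).Adj a b := by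
  intro r a b ha hb hadj
  obtain ⟨-, hu, -⟩ := hadj
  have hmem : (a + b) - 2 * r ∈ I := by
    have := I.add_mem ha hb
    convert this using 1; ring
  have : (Ideal.Quotient.mk I (a + b)) = Ideal.Quotient.mk I (2 * r) :=
    Ideal.Quotient.eq.mpr hmem
  have hu' : IsUnit (Ideal.Quotient.mk I (2 * r)) := this ▸ hu.map (Ideal.Quotient.mk I)
  rw [map_mul] at hu'
  exact h2 (isUnit_of_mul_isUnit_left hu')
end

section
/- Let J(R) be the Jacobson radical of R. If x and y are adjacent in G_UZ(R), then x + J(R) and y + J(R) are adjacent in G_UZ(R/J(R)) (in particular the cosets are distinct). -/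
open SimpleGraph

/-- In a finite commutative ring, any non-unit is a zero divisor. -/
lemma exists_ne_zero_mul_eq_zero_of_not_isUnit {S : Type*} [CommRing S] [Finite S]
    {a : S} (ha : ¬ IsUnit a) : ∃ c : S, c ≠ 0 ∧ a * c = 0 := by
  by_contra hc
  push_neg at hc
  have hinj : Function.Injective (fun c : S => a * c) := by
    intro c d hcd
    simp only at hcd
    have h0 : a * (c - d) = 0 := by rw [mul_sub, hcd, sub_self]
    by_contra hne
    exact hc _ (fun h' => hne (sub_eq_zero.mp h')) h0
  have hsurj := Finite.injective_iff_surjective.mp hinj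
  obtain ⟨b, hb⟩ := hsurj 1
  exact ha ⟨⟨a, b, hb, by rw [mul_comm]; exact hb⟩, rfl⟩

/-- A unit mod the Jacobson radical lifts to a unit. -/
lemma isUnit_of_isUnit_mk {R : Type*} [CommRing R] {x : R}
    (h : IsUnit (Ideal.Quotient.mk (Ideal.jacobson (⊥ : Ideal R)) x)) : IsUnit x := by
  obtain ⟨u, hu⟩ := h
  obtain ⟨c, hc⟩ := Ideal.Quotient.mk_surjective (↑u⁻¹ : R ⧸ Ideal.jacobson (⊥ : Ideal R))
  have hmem : x * c - 1 ∈ Ideal.jacobson (⊥ : Ideal R) := by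
    rw [← Ideal.Quotient.eq_zero_iff_mem]
    have : (Ideal.Quotient.mk (Ideal.jacobson (⊥ : Ideal R))) (x * c) = 1 := by
      rw [map_mul, hc, ← hu, Units.mul_inv]
    rw [map_sub, this, map_one, sub_self]
  have := Ideal.isUnit_of_sub_one_mem_jacobson_bot (x * c) hmem
  exact isUnit_of_mul_isUnit_left this

/-- If `x` and `y` are adjacent in `G_UZ(R)`, then `x + J(R)` and `y + J(R)` are
adjacent in `G_UZ(R/J(R))`. -/
theorem stmt15 (R : Type*) [CommRing R] [Fintype R] (x y : R)
    (h : (GUZ R).Adj x y) :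
    (GUZ (R ⧸ Ideal.jacobson (⊥ : Ideal R))).Adj
      (Ideal.Quotient.mk (Ideal.jacobson (⊥ : Ideal R)) x)
      (Ideal.Quotient.mk (Ideal.jacobson (⊥ : Ideal R)) y) := by
  obtain ⟨hne, hu, c, hc0, hc⟩ := h
  set J := Ideal.jacobson (⊥ : Ideal R)
  set f := Ideal.Quotient.mk J
  -- x*y is not a unit in R
  have hxy_nu : ¬ IsUnit (x * y) := by
    intro hxy
    obtain ⟨v, hv⟩ := hxy
    apply hc0
    have : (↑v⁻¹ : R) * (x * y * c) = c := by rw [← hv, ← mul_assoc, Units.inv_mul, one_mul]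
    rw [hc, mul_zero] at this
    exact this.symm
  -- image of x*y is not a unit
  have hfxy_nu : ¬ IsUnit (f x * f y) := fun hu' => hxy_nu (isUnit_of_isUnit_mk (by rwa [map_mul]))
  -- hence a zero divisor in the finite quotient
  obtain ⟨d, hd0, hd⟩ := exists_ne_zero_mul_eq_zero_of_not_isUnit hfxy_nu
  have hfu : IsUnit (f x + f y) := by rw [← map_add]; exact hu.map f
  refine ⟨?_, hfu, d, hd0, hd⟩
  intro heq
  apply hfxy_nu
  rw [← heq] at hfu ⊢
  have : f x * (2 : R ⧸ J) = f x + f x := by ring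
  rw [← this] at hfu
  have hx : IsUnit (f x) := isUnit_of_mul_isUnit_left hfu
  exact hx.mul hx
end
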